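/- For a prime p and an integer k ≥ 1, define the radical inverse of k in base p by φ_p(k) := Σ_{i≥0} a_i p^{−(i+1)}, where k = Σ_{i≥0} a_i p^i is the base-p expansion of k with digits a_i ∈ {0,…,p−1}. For d ≥ 1, let p_1 < p_2 < … < p_d be the first d primes és define the d-dimensional Halton sequence by x_k := (φ_{p_1}(k), …, φ_{p_d}(k)) ∈ [0,1]^d for k ≥ 1. Then the empirical probability measures ℙ_n := n^{-1} Σ_{k=1}^n δ_{x_k} converge weakly, as n → ∞, to the uniform distribution 𝒰^d on [0,1]^d. -/

import Mathlib

open MeasureTheory Filter Topology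
open scoped ENNReal

noncomputable section

/-- `Euc d` is the Euclidean space `ℝ^d`. -/
abbrev Euc (d : ℕ) : Type := EuclideanSpace ℝ (Fin d)

/-- The unit cube `[0,1]^d`. -/
def unitCube (d : ℕ) : Set (Euc d) := {x | ∀ i, x i ∈ Set.Icc (0 : ℝ) 1}

/-- The uniform distribution `𝒰^d` on `[0,1]^d`. -/
def unifCube (d : ℕ) : Measure (Euc d) := volume.restrict (unitCube d)

/-- Weak convergence of measures along a filter. -/
def WeakTendsto {ι : Type*} (L : Filter ι) {α : Type*} [MeasurableSpace α]
    [TopologicalSpace α] (μs : ι → Measure α) (μ : Measure α) : Prop :=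
  ∀ f : BoundedContinuousFunction α ℝ,
    Tendsto (fun i => ∫ x, f x ∂ μs i) L (𝓝 (∫ x, f x ∂ μ))

/-- The radical inverse of `k` in base `p`: `φ_p(k) = ∑_i a_i p^{−(i+1)}` where the `a_i` are
the base-`p` digits of `k`. -/
def radInv (p k : ℕ) : ℝ :=
  ∑' i : ℕ, ((Nat.digits p k).getD i 0 : ℝ) / (p : ℝ) ^ (i + 1)

/-- The `k`-th element of the `d`-dimensional Halton sequence, whose `j`-th coordinate is the
radical inverse of `k` in base the `(j+1)`-st prime. -/
def halton (d : ℕ) (k : ℕ) : Euc d :=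
  WithLp.toLp 2 (fun j : Fin d => radInv (Nat.nth Nat.Prime (j : ℕ)) k)

/-! ### Auxiliary results: digits and digit reversal -/

lemma digits_getD_eq (p : ℕ) (hp : 2 ≤ p) : ∀ (i k : ℕ),
    (Nat.digits p k).getD i 0 = k / p ^ i % p := by
  intro i
  induction i with
  | zero =>
    intro k
    rcases Nat.eq_zero_or_pos k with h | h
    · simp [h]
    · rw [Nat.digits_def' hp h]; simp
  | succ i ih =>
    intro k
    rcases Nat.eq_zero_or_pos k with h | h
    · simp [h]
    · rw [Nat.digits_def' hp h]
      simp only [List.getD_cons_succ]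
      rw [ih (k / p), Nat.div_div_eq_div_mul, ← pow_succ']

/-- reversal of the first `e` base-`p` digits of `c` -/
def revN (p e c : ℕ) : ℕ := ∑ i ∈ Finset.range e, (c / p ^ i % p) * p ^ (e - 1 - i)

lemma revN_succ (p e c : ℕ) : revN p (e + 1) c = (c % p) * p ^ e + revN p e (c / p) := by
  unfold revN
  rw [Finset.sum_range_succ', add_comm]
  congr 1
  · simp
  · apply Finset.sum_congr rfl
    intro i _
    have h1 : c / p ^ (i + 1) = c / p / p ^ i := by
      rw [Nat.div_div_eq_div_mul, ← pow_succ']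
    have h2 : e + 1 - 1 - (i + 1) = e - 1 - i := by omega
    rw [h1, h2]

lemma revN_lt (p e c : ℕ) (hp : 2 ≤ p) : revN p e c < p ^ e := by
  induction e generalizing c with
  | zero => simp [revN]
  | succ e ih =>
    rw [revN_succ]
    have h1 : revN p e (c / p) < p ^ e := ih _
    have h2 : c % p < p := Nat.mod_lt _ (by omega)
    calc c % p * p ^ e + revN p e (c / p) < c % p * p ^ e + p ^ e := by omega
      _ = (c % p + 1) * p ^ e := by ring
      _ ≤ p * p ^ e := Nat.mul_le_mul_right _ (by omega)
      _ = p ^ (e + 1) := (pow_succ' p e).symm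

lemma revN_inj (p e : ℕ) (hp : 2 ≤ p) : ∀ c c', c < p ^ e → c' < p ^ e →
    revN p e c = revN p e c' → c = c' := by
  induction e with
  | zero => intro c c' hc hc' _; simp at hc hc'; omega
  | succ e ih =>
    intro c c' hc hc' h
    rw [revN_succ, revN_succ] at h
    have h1 : revN p e (c / p) < p ^ e := revN_lt p e _ hp
    have h2 : revN p e (c' / p) < p ^ e := revN_lt p e _ hp
    have hpe : 0 < p ^ e := pow_pos (by omega) e
    have hmod : c % p = c' % p := by
      have e1 : (c % p * p ^ e + revN p e (c / p)) / p ^ e = c % p := by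
        rw [add_comm, Nat.add_mul_div_right _ _ hpe, Nat.div_eq_of_lt h1, zero_add]
      have e2 : (c' % p * p ^ e + revN p e (c' / p)) / p ^ e = c' % p := by
        rw [add_comm, Nat.add_mul_div_right _ _ hpe, Nat.div_eq_of_lt h2, zero_add]
      rw [← e1, ← e2, h]
    rw [hmod] at h
    have hrev : revN p e (c / p) = revN p e (c' / p) := Nat.add_left_cancel h
    have hdiv : c / p = c' / p := by
      apply ih _ _ _ _ hrev
      · rw [Nat.div_lt_iff_lt_mul (by omega)]; rw [pow_succ] at hc; exact hc
      · rw [Nat.div_lt_iff_lt_mul (by omega)]; rw [pow_succ] at hc'; exact hc'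
    rw [← Nat.div_add_mod c p, ← Nat.div_add_mod c' p, hdiv, hmod]

lemma digit_mod (p e i k : ℕ) (hp : 2 ≤ p) (hi : i < e) :
    k % p ^ e / p ^ i % p = k / p ^ i % p := by
  have h0 : 0 < p ^ i := pow_pos (by omega) i
  conv_rhs => rw [← Nat.div_add_mod k (p ^ e)]
  have hpe : p ^ e * (k / p ^ e) = p ^ i * (p ^ (e - i) * (k / p ^ e)) := by
    rw [← mul_assoc, ← pow_add]
    congr 2
    omega
  rw [hpe, Nat.mul_add_div h0]
  have hper : p ^ (e - i) * (k / p ^ e) = p * (p ^ (e - i - 1) * (k / p ^ e)) := by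
    rw [← mul_assoc, ← pow_succ']
    congr 2
    omega
  rw [hper, Nat.mul_add_mod]

lemma revN_mod (p e k : ℕ) (hp : 2 ≤ p) : revN p e (k % p ^ e) = revN p e k := by
  unfold revN
  apply Finset.sum_congr rfl
  intro i hi
  rw [digit_mod p e i k hp (Finset.mem_range.mp hi)]

lemma revN_surj (p e : ℕ) (hp : 2 ≤ p) (m : ℕ) (hm : m < p ^ e) :
    ∃ c, c < p ^ e ∧ revN p e c = m := by
  have := Finset.surj_on_of_inj_on_of_card_le (s := Finset.range (p ^ e))
    (t := Finset.range (p ^ e)) (f := fun c _ => revN p e c)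
    (fun c hc => Finset.mem_range.mpr (revN_lt p e c hp))
    (fun c c' hc hc' h => revN_inj p e hp c c' (Finset.mem_range.mp hc) (Finset.mem_range.mp hc') h)
    le_rfl m (Finset.mem_range.mpr hm)
  obtain ⟨c, hc, h⟩ := this
  exact ⟨c, Finset.mem_range.mp hc, h.symm⟩

/-! ### Auxiliary results: the radical inverse -/

lemma radInv_eq_sum (p k N : ℕ) (hp : 2 ≤ p) (hN : k < p ^ N) :
    radInv p k = ∑ i ∈ Finset.range N, ((k / p ^ i % p : ℕ) : ℝ) / (p : ℝ) ^ (i + 1) := by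
  unfold radInv
  rw [tsum_eq_sum (s := Finset.range N) ?_]
  · exact Finset.sum_congr rfl fun i _ => by rw [digits_getD_eq p hp]
  · intro i hi
    rw [digits_getD_eq p hp]
    have : k / p ^ i = 0 := Nat.div_eq_of_lt (lt_of_lt_of_le hN
      (Nat.pow_le_pow_right (by omega) (by simpa using Finset.mem_range.not.mp hi)))
    simp [this]

lemma geom_sum_aux (p : ℕ) (hp : 2 ≤ p) (e N : ℕ) (h : e ≤ N) :
    ∑ i ∈ Finset.Ico e N, ((p : ℝ) - 1) / (p : ℝ) ^ (i + 1)
      = 1 / (p : ℝ) ^ e - 1 / (p : ℝ) ^ N := by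
  have hp0 : (0 : ℝ) < p := by positivity
  induction N, h using Nat.le_induction with
  | base => simp
  | succ N hN ih =>
    rw [Finset.sum_Ico_succ_top hN, ih]
    have h1 : (p : ℝ) ^ (N + 1) ≠ 0 := by positivity
    have h2 : (p : ℝ) ^ N ≠ 0 := by positivity
    field_simp
    ring

lemma revN_cast_div (p e k : ℕ) (hp : 2 ≤ p) :
    ((revN p e k : ℕ) : ℝ) / (p : ℝ) ^ e
      = ∑ i ∈ Finset.range e, ((k / p ^ i % p : ℕ) : ℝ) / (p : ℝ) ^ (i + 1) := by
  unfold revN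
  push_cast
  rw [Finset.sum_div]
  apply Finset.sum_congr rfl
  intro i hi
  have hi' : i < e := Finset.mem_range.mp hi
  have hpe : (p : ℝ) ^ e = (p : ℝ) ^ (i + 1) * (p : ℝ) ^ (e - 1 - i) := by
    rw [← pow_add]; congr 1; omega
  have h1 : ((p : ℝ) ^ (e - 1 - i)) ≠ 0 := by positivity
  rw [hpe, mul_comm ((p : ℝ) ^ (i + 1)) _, ← div_div, mul_div_assoc, div_self h1, mul_one]

lemma radInv_bounds (p k e : ℕ) (hp : 2 ≤ p) :
    ((revN p e k : ℕ) : ℝ) / (p : ℝ) ^ e ≤ radInv p k ∧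
      radInv p k < (((revN p e k : ℕ) : ℝ) + 1) / (p : ℝ) ^ e := by
  set N := e + (k + 1) with hNdef
  have hkN : k < p ^ N := by
    calc k < 2 ^ k := Nat.lt_two_pow_self
      _ ≤ 2 ^ N := Nat.pow_le_pow_right (by omega) (by omega)
      _ ≤ p ^ N := Nat.pow_le_pow_left (by omega) N
  have heN : e ≤ N := by omega
  have hsplit : radInv p k = ((revN p e k : ℕ) : ℝ) / (p : ℝ) ^ e
      + ∑ i ∈ Finset.Ico e N, ((k / p ^ i % p : ℕ) : ℝ) / (p : ℝ) ^ (i + 1) := by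
    rw [radInv_eq_sum p k N hp hkN, revN_cast_div p e k hp, Finset.range_eq_Ico,
      ← Finset.sum_Ico_consecutive _ (Nat.zero_le e) heN, ← Finset.range_eq_Ico]
  have hT0 : 0 ≤ ∑ i ∈ Finset.Ico e N, ((k / p ^ i % p : ℕ) : ℝ) / (p : ℝ) ^ (i + 1) := by
    apply Finset.sum_nonneg; intro i _; positivity
  have hT1 : ∑ i ∈ Finset.Ico e N, ((k / p ^ i % p : ℕ) : ℝ) / (p : ℝ) ^ (i + 1)
      ≤ 1 / (p : ℝ) ^ e - 1 / (p : ℝ) ^ N := by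
    rw [← geom_sum_aux p hp e N heN]
    apply Finset.sum_le_sum
    intro i _
    gcongr
    have hd : k / p ^ i % p ≤ p - 1 := by
      have := Nat.mod_lt (k / p ^ i) (show 0 < p by omega); omega
    calc ((k / p ^ i % p : ℕ) : ℝ) ≤ ((p - 1 : ℕ) : ℝ) := by exact_mod_cast hd
      _ = (p : ℝ) - 1 := by rw [Nat.cast_sub (by omega : 1 ≤ p)]; norm_num
  constructor
  · rw [hsplit]; linarith
  · rw [hsplit, add_div]
    have hN0 : (0 : ℝ) < 1 / (p : ℝ) ^ N := by positivity
    linarith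

/-! ### Auxiliary results: CRT and counting -/

lemma crt_exists {d : ℕ} (q : Fin d → ℕ) (hq : ∀ j, 0 < q j)
    (hcop : Pairwise (Function.onFun Nat.Coprime q)) (b : Fin d → ℕ) (hb : ∀ j, b j < q j) :
    ∃ c : ℕ, c < ∏ j, q j ∧ ∀ k : ℕ, ((∀ j, k % q j = b j) ↔ k % (∏ j, q j) = c) := by
  haveI : NeZero (∏ j, q j) := ⟨(Finset.prod_pos (fun j _ => hq j)).ne'⟩
  haveI : ∀ j, NeZero (q j) := fun j => ⟨(hq j).ne'⟩
  set P := ∏ j, q j with hP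
  let E := ZMod.prodEquivPi q hcop
  set z : ZMod P := E.symm (fun j => ((b j : ℕ) : ZMod (q j))) with hz
  refine ⟨z.val, ZMod.val_lt z, fun k => ?_⟩
  have hEk : E ((k : ℕ) : ZMod P) = fun j => ((k : ℕ) : ZMod (q j)) := by
    have h1 : E ((k : ℕ) : ZMod P) = ((k : ℕ) : ∀ j, ZMod (q j)) :=
      map_natCast (E : ZMod P →+* ∀ j, ZMod (q j)) k
    rw [h1]
    rfl
  have step1 : (∀ j, k % q j = b j) ↔ ∀ j, ((k : ℕ) : ZMod (q j)) = ((b j : ℕ) : ZMod (q j)) := by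
    apply forall_congr'
    intro j
    rw [ZMod.natCast_eq_natCast_iff]
    unfold Nat.ModEq
    rw [Nat.mod_eq_of_lt (hb j)]
  have step2 : (∀ j, ((k : ℕ) : ZMod (q j)) = ((b j : ℕ) : ZMod (q j)))
      ↔ ((k : ℕ) : ZMod P) = z := by
    rw [← funext_iff]
    constructor
    · intro h
      apply E.injective
      rw [hEk, hz, RingEquiv.apply_symm_apply, h]
    · intro h
      have := congrArg E h
      rw [hEk, hz, RingEquiv.apply_symm_apply] at this
      exact this
  have step3 : ((k : ℕ) : ZMod P) = z ↔ k % P = z.val := by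
    constructor
    · intro h; rw [← h, ZMod.val_natCast]
    · intro h
      apply ZMod.val_injective
      rw [ZMod.val_natCast, h]
  rw [step1, step2, step3]

open Finset in
lemma count_bound (P n c : ℕ) (hP : 0 < P) (hc : c < P) :
    |((#((Finset.Icc 1 n).filter (fun k => k % P = c)) : ℝ)) - (n : ℝ) / P| ≤ 2 := by
  have hIcc : Finset.Icc 1 n = Finset.Ioc 0 n := Finset.Icc_add_one_left_eq_Ioc 0 n
  have hfc : (Finset.Icc 1 n).filter (fun k => k % P = c)
      = (Finset.Ioc 0 n).filter (fun k => k ≡ c [MOD P]) := by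
    rw [hIcc]
    apply Finset.filter_congr
    intro x _
    simp only [Nat.ModEq, Nat.mod_eq_of_lt hc, eq_iff_iff]
  rw [hfc]
  have hcard := Nat.Ioc_filter_modEq_card 0 n hP c
  set A : ℤ := ⌊(((n : ℕ) : ℚ) - c) / P⌋ with hA
  set B : ℤ := ⌊(((0 : ℕ) : ℚ) - c) / P⌋ with hB
  have hPQ : (0 : ℚ) < (P : ℚ) := by positivity
  have hcP : (c : ℚ) ≤ (P : ℚ) := by exact_mod_cast hc.le
  have hAle : (A : ℚ) ≤ (n : ℚ) / P := by
    calc (A : ℚ) ≤ (((n : ℕ) : ℚ) - c) / P := Int.floor_le _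
      _ ≤ (n : ℚ) / P := by gcongr; simp
  have hAge : (n : ℚ) / P - 2 ≤ (A : ℚ) := by
    have h1 : (((n : ℕ) : ℚ) - c) / P - 1 < (A : ℚ) := Int.sub_one_lt_floor _
    have h2 : (c : ℚ) / P ≤ 1 := by rw [div_le_one hPQ]; exact hcP
    have h3 : (((n : ℕ) : ℚ) - c) / P = (n : ℚ) / P - (c : ℚ) / P := sub_div _ _ _
    linarith
  have hBle : (B : ℚ) ≤ 0 := by
    have : B ≤ 0 := Int.floor_nonpos (by
      apply div_nonpos_of_nonpos_of_nonneg _ hPQ.le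
      simp)
    exact_mod_cast this
  have hBge : (-1 : ℚ) ≤ (B : ℚ) := by
    have : (-1 : ℤ) ≤ B := by
      rw [hB, Int.le_floor]
      rw [le_div_iff₀ hPQ]
      push_cast
      linarith
    exact_mod_cast this
  have hcQ : ((#((Finset.Ioc 0 n).filter (fun k => k ≡ c [MOD P])) : ℕ) : ℚ)
      = ((max (A - B) 0 : ℤ) : ℚ) := by exact_mod_cast congrArg (fun z : ℤ => (z : ℚ)) hcard
  rw [Int.cast_max] at hcQ
  have hq1 : ((#((Finset.Ioc 0 n).filter (fun k => k ≡ c [MOD P])) : ℕ) : ℚ)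
      ≤ (n : ℚ) / P + 2 := by
    rw [hcQ]
    apply max_le
    · push_cast
      linarith
    · positivity
  have hq2 : (n : ℚ) / P - 2 ≤ ((#((Finset.Ioc 0 n).filter (fun k => k ≡ c [MOD P])) : ℕ) : ℚ) := by
    rw [hcQ]
    refine le_trans ?_ (le_max_left _ _)
    push_cast
    linarith
  rw [abs_le]
  have r1 := (Rat.cast_le (K := ℝ)).mpr hq1
  have r2 := (Rat.cast_le (K := ℝ)).mpr hq2
  push_cast at r1 r2
  constructor <;> linarith

/-! ### Auxiliary results: boxes in the cube -/

section Boxes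
variable {d : ℕ} (q : Fin d → ℕ)

/-- the box with lower corner `m j / q j` and sides `1 / q j` -/
def Box (m : ∀ j, Fin (q j)) : Set (Euc d) :=
  {x | ∀ j, ((m j : ℕ) : ℝ) / q j ≤ x j ∧ x j < (((m j : ℕ) : ℝ) + 1) / q j}

lemma continuous_euc_apply (j : Fin d) : Continuous fun x : Euc d => x j :=
  PiLp.continuous_apply 2 _ j

lemma box_measurable (m : ∀ j, Fin (q j)) : MeasurableSet (Box q m) := by
  have : Box q m = ⋂ j, ((fun x : Euc d => x j) ⁻¹'
      (Set.Ico (((m j : ℕ) : ℝ) / q j) ((((m j : ℕ) : ℝ) + 1) / q j))) := by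
    ext x; simp [Box, Set.mem_Ico]
  rw [this]
  exact MeasurableSet.iInter fun j =>
    (measurableSet_Ico).preimage (continuous_euc_apply j).measurable

lemma box_volume (m : ∀ j, Fin (q j)) (hq : ∀ j, 0 < q j) :
    volume (Box q m) = ENNReal.ofReal (∏ j, ((1 : ℝ) / q j)) := by
  have hΦ := (EuclideanSpace.volume_preserving_symm_measurableEquiv_toLp (Fin d)).symm
  have hpre : (MeasurableEquiv.toLp 2 (Fin d → ℝ)).symm.symm ⁻¹' (Box q m)
      = Set.pi Set.univ (fun j => Set.Ico (((m j : ℕ) : ℝ) / q j)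
        ((((m j : ℕ) : ℝ) + 1) / q j)) := by
    ext y
    simp only [Set.mem_preimage, Box, Set.mem_setOf_eq, Set.mem_pi, Set.mem_univ,
      Set.mem_Ico, true_implies]
    rfl
  rw [← hΦ.measure_preimage (box_measurable q m).nullMeasurableSet, hpre, volume_pi_pi]
  have : ∀ j, volume (Set.Ico (((m j : ℕ) : ℝ) / q j) ((((m j : ℕ) : ℝ) + 1) / q j))
      = ENNReal.ofReal ((1 : ℝ) / q j) := by
    intro j
    rw [Real.volume_Ico]
    congr 1
    have hqj : (0 : ℝ) < q j := by exact_mod_cast hq j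
    field_simp
    ring
  rw [Finset.prod_congr rfl (fun j _ => this j)]
  exact (ENNReal.ofReal_prod_of_nonneg (fun i _ => by positivity)).symm

lemma box_subset (m : ∀ j, Fin (q j)) (hq : ∀ j, 0 < q j) :
    Box q m ⊆ {x : Euc d | ∀ j, 0 ≤ x j ∧ x j < 1} := by
  intro x hx j
  obtain ⟨h1, h2⟩ := hx j
  have hqj : (0 : ℝ) < q j := by exact_mod_cast hq j
  constructor
  · exact le_trans (by positivity) h1
  · have hmq : ((m j : ℕ) : ℕ) + 1 ≤ q j := (m j).2
    have hmq' : ((m j : ℕ) : ℝ) + 1 ≤ (q j : ℝ) := by exact_mod_cast hmq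
    have h3 : (((m j : ℕ) : ℝ) + 1) / q j ≤ 1 := by
      rw [div_le_one hqj]
      exact hmq'
    linarith

lemma box_subset_cube (m : ∀ j, Fin (q j)) (hq : ∀ j, 0 < q j) :
    Box q m ⊆ unitCube d := fun x hx j => ⟨(box_subset q m hq hx j).1,
      (box_subset q m hq hx j).2.le⟩

lemma interval_nat_eq {a b qq : ℕ} {t : ℝ} (hq : (0:ℝ) < qq)
    (ha : (a : ℝ) / qq ≤ t) (ha' : t < ((a : ℝ) + 1) / qq)
    (hb : (b : ℝ) / qq ≤ t) (hb' : t < ((b : ℝ) + 1) / qq) : a = b := by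
  have h1 : (a : ℝ) < (b : ℝ) + 1 := by
    have := lt_of_le_of_lt ha hb'
    exact (div_lt_div_iff_of_pos_right hq).mp this
  have h2 : (b : ℝ) < (a : ℝ) + 1 := by
    have := lt_of_le_of_lt hb ha'
    exact (div_lt_div_iff_of_pos_right hq).mp this
  have h1' : a < b + 1 := by exact_mod_cast h1
  have h2' : b < a + 1 := by exact_mod_cast h2
  omega

lemma box_disjoint (hq : ∀ j, 0 < q j) : Pairwise (Function.onFun Disjoint (Box q)) := by
  intro m m' hmm
  rw [Function.onFun, Set.disjoint_left]
  intro x hx hx'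
  apply hmm
  funext j
  apply Fin.ext
  exact interval_nat_eq (by exact_mod_cast hq j) (hx j).1 (hx j).2 (hx' j).1 (hx' j).2

lemma box_union (hq : ∀ j, 0 < q j) :
    (⋃ m, Box q m) = {x : Euc d | ∀ j, 0 ≤ x j ∧ x j < 1} := by
  apply Set.Subset.antisymm
  · exact Set.iUnion_subset fun m => box_subset q m hq
  · intro x hx
    have hqj : ∀ j, (0 : ℝ) < q j := fun j => by exact_mod_cast hq j
    have hx0 : ∀ j, 0 ≤ x j := fun j => (hx j).1
    have hfl : ∀ j, ⌊x j * q j⌋₊ < q j := by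
      intro j
      rw [Nat.floor_lt (mul_nonneg (hx0 j) (by positivity))]
      have := (hx j).2
      calc x j * q j < 1 * q j := by
            apply mul_lt_mul_of_pos_right this (hqj j)
        _ = (q j : ℝ) := one_mul _
    refine Set.mem_iUnion.mpr ⟨fun j => ⟨⌊x j * q j⌋₊, hfl j⟩, fun j => ⟨?_, ?_⟩⟩
    · rw [div_le_iff₀ (hqj j)]
      exact Nat.floor_le (mul_nonneg (hx0 j) (by positivity))
    · rw [lt_div_iff₀ (hqj j)]
      exact Nat.lt_floor_add_one _

lemma hyperplane_null (j : Fin d) : volume {x : Euc d | x j = 1} = 0 := by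
  have hmeas : MeasurableSet {x : Euc d | x j = 1} :=
    (continuous_euc_apply j).measurable (measurableSet_singleton (1 : ℝ))
  rw [← ((EuclideanSpace.volume_preserving_symm_measurableEquiv_toLp (Fin d)).symm).measure_preimage
    hmeas.nullMeasurableSet]
  have hpre : (MeasurableEquiv.toLp 2 (Fin d → ℝ)).symm.symm ⁻¹' {x : Euc d | x j = 1}
      = {y : Fin d → ℝ | y j = 1} := rfl
  rw [hpre, MeasureTheory.volume_pi]
  exact MeasureTheory.Measure.pi_hyperplane _ j 1

lemma cube_ae_eq_union (hq : ∀ j, 0 < q j) :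
    unitCube d =ᵐ[volume] ⋃ m, Box q m := by
  rw [MeasureTheory.ae_eq_set]
  constructor
  · refine measure_mono_null ?_ (measure_iUnion_null fun j => hyperplane_null j)
    intro x hx
    obtain ⟨hxc, hxu⟩ := hx
    rw [box_union q hq] at hxu
    simp only [Set.mem_setOf_eq, not_forall] at hxu
    obtain ⟨j, hj⟩ := hxu
    have h1 := hxc j
    have : x j = 1 := by
      rcases Set.mem_Icc.mp h1 with ⟨ha, hb⟩
      by_contra hne
      exact hj ⟨ha, lt_of_le_of_ne hb hne⟩
    exact Set.mem_iUnion.mpr ⟨j, this⟩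
  · have hsub : (⋃ m, Box q m) \ unitCube d = ∅ :=
      Set.diff_eq_empty.mpr (Set.iUnion_subset fun m => box_subset_cube q m hq)
    rw [hsub]
    exact measure_empty

lemma box_finite (m : ∀ j, Fin (q j)) (hq : ∀ j, 0 < q j) :
    IsFiniteMeasure (volume.restrict (Box q m)) := by
  constructor
  rw [Measure.restrict_apply_univ, box_volume q m hq]
  exact ENNReal.ofReal_lt_top

lemma integral_cube (hq : ∀ j, 0 < q j) (f : BoundedContinuousFunction (Euc d) ℝ) :
    ∫ x, f x ∂(unifCube d) = ∑ m : ∀ j, Fin (q j), ∫ x in Box q m, f x := by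
  have hIntOn : ∀ m : ∀ j, Fin (q j), IntegrableOn (fun x => f x) (Box q m) volume :=
    fun m => by
      haveI := box_finite q m hq
      exact f.integrable _
  calc ∫ x, f x ∂(unifCube d) = ∫ x in unitCube d, f x := rfl
    _ = ∫ x in ⋃ m, Box q m, f x := setIntegral_congr_set (cube_ae_eq_union q hq)
    _ = ∑ m, ∫ x in Box q m, f x :=
        integral_iUnion_fintype (box_measurable q) (box_disjoint q hq) hIntOn

lemma box_volume_toReal (m : ∀ j, Fin (q j)) (hq : ∀ j, 0 < q j) :
    (volume (Box q m)).toReal = ∏ j, ((1 : ℝ) / q j) := by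
  rw [box_volume q m hq, ENNReal.toReal_ofReal (by positivity)]

lemma box_integral_est (hq : ∀ j, 0 < q j) (f : BoundedContinuousFunction (Euc d) ℝ)
    (m : ∀ j, Fin (q j)) (y : Euc d) {ε : ℝ}
    (hfe : ∀ x ∈ Box q m, |f x - f y| ≤ ε) :
    |(∫ x in Box q m, f x) - f y * ∏ j, ((1 : ℝ) / q j)| ≤ ε * ∏ j, ((1 : ℝ) / q j) := by
  haveI := box_finite q m hq
  have hvol : volume (Box q m) < ⊤ := by
    rw [box_volume q m hq]; exact ENNReal.ofReal_lt_top
  have hIntOn : IntegrableOn (fun x => f x) (Box q m) volume := f.integrable _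
  have h2 : ∫ x in Box q m, (f x - f y) =
      (∫ x in Box q m, f x) - f y * ∏ j, ((1 : ℝ) / q j) := by
    rw [integral_sub hIntOn (integrableOn_const hvol.ne), setIntegral_const, measureReal_def,
      box_volume_toReal q m hq, smul_eq_mul, mul_comm]
  rw [← h2]
  have := norm_setIntegral_le_of_norm_le_const (μ := volume) hvol
    (f := fun x => f x - f y) (C := ε) (fun x hx => by rw [Real.norm_eq_abs]; exact hfe x hx)
  rw [Real.norm_eq_abs, measureReal_def, box_volume_toReal q m hq] at this
  exact this

end Boxes

/-! ### Auxiliary results: geometry of the cube -/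

lemma dist_le_of_coords {d : ℕ} (x y : Euc d) {η : ℝ} (hη : 0 ≤ η)
    (h : ∀ j, |x j - y j| ≤ η) : dist x y ≤ Real.sqrt d * η := by
  rw [EuclideanSpace.dist_eq]
  have hsum : ∑ j, dist (x j) (y j) ^ 2 ≤ (d : ℝ) * η ^ 2 := by
    calc ∑ j, dist (x j) (y j) ^ 2 ≤ ∑ _j : Fin d, η ^ 2 := by
          apply Finset.sum_le_sum
          intro j _
          rw [Real.dist_eq]
          exact pow_le_pow_left₀ (abs_nonneg _) (h j) 2
      _ = (d : ℝ) * η ^ 2 := by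
          rw [Finset.sum_const, Finset.card_univ, Fintype.card_fin, nsmul_eq_mul]
  calc Real.sqrt (∑ j, dist (x j) (y j) ^ 2) ≤ Real.sqrt ((d : ℝ) * η ^ 2) :=
        Real.sqrt_le_sqrt hsum
    _ = Real.sqrt d * η := by
        rw [Real.sqrt_mul (by positivity), Real.sqrt_sq hη]

lemma cube_compact (d : ℕ) : IsCompact (unitCube d) := by
  apply Metric.isCompact_of_isClosed_isBounded
  · have : unitCube d = ⋂ j, ((fun x : Euc d => x j) ⁻¹' Set.Icc (0 : ℝ) 1) := by
      ext x; simp [unitCube]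
    rw [this]
    exact isClosed_iInter fun j => IsClosed.preimage (continuous_euc_apply j) isClosed_Icc
  · apply Metric.isBounded_closedBall (x := (0 : Euc d)) (r := Real.sqrt d * 1) |>.subset
    intro x hx
    rw [Metric.mem_closedBall]
    apply dist_le_of_coords x 0 zero_le_one
    intro j
    have h1 := (hx j).1
    have h2 := (hx j).2
    have h0 : (0 : Euc d) j = 0 := rfl
    rw [h0, sub_zero, abs_le]
    exact ⟨by linarith, h2⟩

/-- The empirical measures of the `d`-dimensional Halton sequence converge weakly to the
uniform distribution on `[0,1]^d`. -/
theorem stmt19 (d : ℕ) :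
    WeakTendsto atTop
      (fun n : ℕ => (n : ℝ≥0∞)⁻¹ • ∑ k ∈ Finset.Icc 1 n, Measure.dirac (halton d k))
      (unifCube d) := by
  classical
  intro f
  -- formula for the empirical integral
  have hInt : ∀ n : ℕ, (∫ x, f x ∂((n : ℝ≥0∞)⁻¹ • ∑ k ∈ Finset.Icc 1 n,
      Measure.dirac (halton d k)))
      = (n : ℝ)⁻¹ * ∑ k ∈ Finset.Icc 1 n, f (halton d k) := by
    intro n
    rw [integral_smul_measure, integral_finset_sum_measure (fun k _ => f.integrable _)]
    rw [Finset.sum_congr rfl fun (k : ℕ) _ =>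
      integral_dirac (fun x => f x) (halton d k)]
    simp [ENNReal.toReal_inv, smul_eq_mul]
  simp only [hInt]
  rw [Metric.tendsto_atTop]
  intro ε hε
  set ε4 : ℝ := ε / 4 with hε4
  have hε4pos : 0 < ε4 := by positivity
  -- uniform continuity on the cube
  have hUC := (cube_compact d).uniformContinuousOn_of_continuous f.continuous.continuousOn
  obtain ⟨δ, hδpos, hδ⟩ := Metric.uniformContinuousOn_iff.mp hUC ε4 hε4pos
  -- choice of the mesh exponent
  have hsq : (0 : ℝ) ≤ Real.sqrt d := Real.sqrt_nonneg d
  obtain ⟨e, he⟩ := exists_pow_lt_of_lt_one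
    (show 0 < δ / (Real.sqrt d + 1) by positivity)
    (show (1 : ℝ) / 2 < 1 by norm_num)
  have hmesh : Real.sqrt d * ((1 : ℝ) / 2) ^ e < δ := by
    have h1 : Real.sqrt d * ((1 : ℝ) / 2) ^ e ≤ (Real.sqrt d + 1) * ((1 : ℝ) / 2) ^ e :=
      mul_le_mul_of_nonneg_right (by linarith) (by positivity)
    have h2 : (Real.sqrt d + 1) * ((1 : ℝ) / 2) ^ e
        < (Real.sqrt d + 1) * (δ / (Real.sqrt d + 1)) :=
      mul_lt_mul_of_pos_left he (by positivity)
    have h3 : (Real.sqrt d + 1) * (δ / (Real.sqrt d + 1)) = δ := by field_simp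
    linarith
  -- primes and moduli
  set p : Fin d → ℕ := fun j => Nat.nth Nat.Prime (j : ℕ) with hpdef
  have hp : ∀ j, 2 ≤ p j := fun j => (Nat.prime_nth_prime (j : ℕ)).two_le
  set q : Fin d → ℕ := fun j => p j ^ e with hqdef
  have hq : ∀ j, 0 < q j := fun j => pow_pos (by have := hp j; omega) e
  set P : ℕ := ∏ j, q j with hPdef
  have hP : 0 < P := Finset.prod_pos fun j _ => hq j
  have hPr : (0 : ℝ) < P := by exact_mod_cast hP
  have hqcast : ∀ j, ((q j : ℕ) : ℝ) = ((p j : ℝ)) ^ e := by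
    intro j; rw [hqdef]; push_cast; rfl
  have hside : ∀ j, (1 : ℝ) / q j ≤ ((1 : ℝ) / 2) ^ e := by
    intro j
    have h2e : (2 : ℕ) ^ e ≤ q j := Nat.pow_le_pow_left (hp j) e
    have h2e' : ((2 : ℝ)) ^ e ≤ (q j : ℝ) := by exact_mod_cast h2e
    rw [div_pow, one_pow]
    exact one_div_le_one_div_of_le (by positivity) h2e'
  set V : ℝ := ∏ j, ((1 : ℝ) / q j) with hVdef
  have hV : V = 1 / (P : ℝ) := by
    rw [hVdef, Finset.prod_div_distrib, Finset.prod_const_one, hPdef, Nat.cast_prod]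
  -- the fiber map and corners
  set mk : ℕ → (∀ j, Fin (q j)) := fun k j => ⟨revN (p j) e k, revN_lt (p j) e k (hp j)⟩
    with hmkdef
  set cor : (∀ j, Fin (q j)) → Euc d := fun m => WithLp.toLp 2 (fun j => ((m j : ℕ) : ℝ) / q j) with hcordef
  have hmem : ∀ k : ℕ, halton d k ∈ Box q (mk k) := by
    intro k
    simp only [Box, Set.mem_setOf_eq]
    intro j
    have hb := radInv_bounds (p j) k e (hp j)
    rw [hqcast j]
    exact ⟨hb.1, hb.2⟩
  have hcor : ∀ m, cor m ∈ unitCube d := by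
    intro m
    simp only [unitCube, Set.mem_setOf_eq]
    intro j
    have hqj : (0 : ℝ) < q j := by exact_mod_cast hq j
    refine Set.mem_Icc.mpr ⟨by positivity, ?_⟩
    simp only [hcordef]
    rw [div_le_one hqj]
    exact_mod_cast (m j).2.le
  have hdist : ∀ m, ∀ x ∈ Box q m, dist x (cor m) < δ := by
    intro m x hx
    have hco : ∀ j, |x j - cor m j| ≤ ((1 : ℝ) / 2) ^ e := by
      intro j
      obtain ⟨h1, h2⟩ := hx j
      have hqj : (0 : ℝ) < q j := by exact_mod_cast hq j
      have hplus : (((m j : ℕ) : ℝ) + 1) / q j = ((m j : ℕ) : ℝ) / q j + 1 / q j :=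
        add_div _ _ _
      have hs := hside j
      have h0 : (0 : ℝ) ≤ ((1 : ℝ) / 2) ^ e := by positivity
      rw [abs_le]
      constructor
      · simp only [hcordef]
        linarith
      · simp only [hcordef]
        rw [hplus] at h2
        linarith
    calc dist x (cor m) ≤ Real.sqrt d * ((1 : ℝ) / 2) ^ e :=
          dist_le_of_coords x (cor m) (by positivity) hco
      _ < δ := hmesh
  have hfa : ∀ m, ∀ x ∈ Box q m, |f x - f (cor m)| ≤ ε4 := by
    intro m x hx
    have := hδ x (box_subset_cube q m hq hx) (cor m) (hcor m) (hdist m x hx)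
    rw [Real.dist_eq] at this
    exact this.le
  -- step-function value
  set S : ℝ := ∑ m : ∀ j, Fin (q j), f (cor m) * V with hSdef
  have hIS : |(∫ x, f x ∂(unifCube d)) - S| ≤ ε4 := by
    rw [integral_cube q hq f, hSdef, ← Finset.sum_sub_distrib]
    calc |∑ m : ∀ j, Fin (q j), ((∫ x in Box q m, f x) - f (cor m) * V)|
        ≤ ∑ m : ∀ j, Fin (q j), |(∫ x in Box q m, f x) - f (cor m) * V| :=
          Finset.abs_sum_le_sum_abs _ _
      _ ≤ ∑ _m : ∀ j, Fin (q j), ε4 * V := Finset.sum_le_sum fun m _ =>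
          box_integral_est q hq f m (cor m) (hfa m)
      _ = (P : ℝ) * (ε4 * V) := by
          rw [Finset.sum_const, Finset.card_univ, nsmul_eq_mul]
          congr 1
          rw [Fintype.card_pi]
          simp only [Fintype.card_fin]
          rfl
      _ = ε4 := by
          rw [hV]
          field_simp
  -- CRT data
  have hcop : Pairwise (Function.onFun Nat.Coprime q) := by
    intro i j hij
    have hpij : p i ≠ p j := by
      intro hcon
      exact hij (Fin.ext (Nat.nth_injective Nat.infinite_setOf_prime hcon))
    have hco : Nat.Coprime (p i) (p j) :=
      (Nat.coprime_primes (Nat.prime_nth_prime _) (Nat.prime_nth_prime _)).mpr hpij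
    simp only [Function.onFun, hqdef]
    exact Nat.Coprime.pow _ _ hco
  choose bfun hb1 hb2 using fun (m : ∀ j, Fin (q j)) (j : Fin d) =>
    revN_surj (p j) e (hp j) ((m j : ℕ)) (m j).2
  choose cres hc1 hc2 using fun (m : ∀ j, Fin (q j)) =>
    crt_exists q hq hcop (bfun m) (fun j => hb1 m j)
  have hfilter : ∀ (n : ℕ) (m : ∀ j, Fin (q j)),
      (Finset.Icc 1 n).filter (fun k => mk k = m)
        = (Finset.Icc 1 n).filter (fun k => k % P = cres m) := by
    intro n m
    apply Finset.filter_congr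
    intro k _
    constructor
    · intro hE
      rw [hPdef, ← hc2 m k]
      intro j
      have h1 : revN (p j) e k = (m j : ℕ) := congrArg Fin.val (congrFun hE j)
      apply revN_inj (p j) e (hp j) _ _ (Nat.mod_lt _ (hq j)) (hb1 m j)
      rw [revN_mod (p j) e k (hp j), h1, hb2 m j]
    · intro hE
      have hall := (hc2 m k).mpr hE
      funext j
      apply Fin.ext
      show revN (p j) e k = (m j : ℕ)
      rw [← revN_mod (p j) e k (hp j), hall j, hb2 m j]
  have hcount : ∀ (n : ℕ) (m : ∀ j, Fin (q j)),
      |((((Finset.Icc 1 n).filter (fun k => mk k = m)).card : ℝ)) - (n : ℝ) / P| ≤ 2 := by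
    intro n m
    rw [hfilter n m]
    exact count_bound P n (cres m) hP (hc1 m)
  have hfib : ∀ n : ℕ, ∑ m : ∀ j, Fin (q j),
      ((((Finset.Icc 1 n).filter (fun k => mk k = m)).card : ℝ)) * f (cor m)
      = ∑ k ∈ Finset.Icc 1 n, f (cor (mk k)) := by
    intro n
    rw [← Finset.sum_fiberwise_of_maps_to' (fun k _ => Finset.mem_univ (mk k))
      (fun m => f (cor m))]
    apply Finset.sum_congr rfl
    intro m _
    rw [Finset.sum_const, nsmul_eq_mul]
  -- choose the threshold
  obtain ⟨N0, hN0⟩ := exists_nat_ge (2 * P * (‖f‖ + 1) / ε4)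
  refine ⟨max 1 N0, fun n hn => ?_⟩
  have hn1 : 1 ≤ n := le_trans (le_max_left _ _) hn
  have hnN0 : (N0 : ℝ) ≤ n := by exact_mod_cast le_trans (le_max_right _ _) hn
  have hn0 : (0 : ℝ) < n := by exact_mod_cast hn1
  set A : ℝ := (n : ℝ)⁻¹ * ∑ k ∈ Finset.Icc 1 n, f (halton d k) with hAdef
  set B : ℝ := (n : ℝ)⁻¹ * ∑ k ∈ Finset.Icc 1 n, f (cor (mk k)) with hBdef
  -- |A - B| ≤ ε4
  have hAB : |A - B| ≤ ε4 := by
    rw [hAdef, hBdef, ← mul_sub, ← Finset.sum_sub_distrib, abs_mul, abs_inv,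
      abs_of_nonneg (by positivity : (0:ℝ) ≤ (n:ℝ))]
    have hbound : |∑ k ∈ Finset.Icc 1 n, (f (halton d k) - f (cor (mk k)))|
        ≤ (n : ℝ) * ε4 := by
      calc |∑ k ∈ Finset.Icc 1 n, (f (halton d k) - f (cor (mk k)))|
          ≤ ∑ k ∈ Finset.Icc 1 n, |f (halton d k) - f (cor (mk k))| :=
            Finset.abs_sum_le_sum_abs _ _
        _ ≤ ∑ _k ∈ Finset.Icc 1 n, ε4 := Finset.sum_le_sum fun k _ =>
            hfa (mk k) (halton d k) (hmem k)
        _ = (n : ℝ) * ε4 := by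
            rw [Finset.sum_const, Nat.card_Icc, nsmul_eq_mul]
            norm_num
    calc (n : ℝ)⁻¹ * |∑ k ∈ Finset.Icc 1 n, (f (halton d k) - f (cor (mk k)))|
        ≤ (n : ℝ)⁻¹ * ((n : ℝ) * ε4) := by
          apply mul_le_mul_of_nonneg_left hbound (by positivity)
      _ = ε4 := by field_simp
  -- |B - S| ≤ ε4
  have hBS : |B - S| ≤ ε4 := by
    have hBalt : B = ∑ m : ∀ j, Fin (q j),
        f (cor m) * (((((Finset.Icc 1 n).filter (fun k => mk k = m)).card : ℝ)) / n) := by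
      rw [hBdef, ← hfib n, Finset.mul_sum]
      apply Finset.sum_congr rfl
      intro m _
      ring
    rw [hBalt, hSdef, ← Finset.sum_sub_distrib]
    have hterm : ∀ m : ∀ j, Fin (q j),
        |f (cor m) * (((((Finset.Icc 1 n).filter (fun k => mk k = m)).card : ℝ)) / n)
          - f (cor m) * V| ≤ (‖f‖ + 1) * (2 / n) := by
      intro m
      rw [← mul_sub, abs_mul]
      have h1 : |(f (cor m) : ℝ)| ≤ ‖f‖ + 1 := by
        have := f.norm_coe_le_norm (cor m)
        rw [Real.norm_eq_abs] at this
        linarith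
      have h2 : |((((Finset.Icc 1 n).filter (fun k => mk k = m)).card : ℝ)) / n - V|
          ≤ 2 / n := by
        have hc := hcount n m
        rw [hV]
        have hrw : ((((Finset.Icc 1 n).filter (fun k => mk k = m)).card : ℝ)) / n
            - 1 / (P : ℝ)
            = (((((Finset.Icc 1 n).filter (fun k => mk k = m)).card : ℝ)) - (n : ℝ) / P)
              / n := by
          have hn0' : (n : ℝ) ≠ 0 := hn0.ne'
          rw [sub_div]
          congr 1
          rw [div_div, mul_comm (P : ℝ) (n : ℝ), ← div_div, div_self hn0']
        rw [hrw, abs_div, abs_of_nonneg hn0.le]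
        gcongr
      exact mul_le_mul h1 h2 (abs_nonneg _) (by positivity)
    calc |∑ m : ∀ j, Fin (q j),
          (f (cor m) * (((((Finset.Icc 1 n).filter (fun k => mk k = m)).card : ℝ)) / n)
            - f (cor m) * V)|
        ≤ ∑ m : ∀ j, Fin (q j),
          |f (cor m) * (((((Finset.Icc 1 n).filter (fun k => mk k = m)).card : ℝ)) / n)
            - f (cor m) * V| := Finset.abs_sum_le_sum_abs _ _
      _ ≤ ∑ _m : ∀ j, Fin (q j), (‖f‖ + 1) * (2 / n) :=
          Finset.sum_le_sum fun m _ => hterm m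
      _ = (P : ℝ) * ((‖f‖ + 1) * (2 / n)) := by
          rw [Finset.sum_const, Finset.card_univ, nsmul_eq_mul]
          congr 1
          rw [Fintype.card_pi]
          simp only [Fintype.card_fin]
          rfl
      _ ≤ ε4 := by
          rw [div_le_iff₀ hε4pos] at hN0
          have hineq : 2 * (P : ℝ) * (‖f‖ + 1) ≤ (n : ℝ) * ε4 := by
            calc 2 * (P : ℝ) * (‖f‖ + 1) ≤ (N0 : ℝ) * ε4 := hN0
              _ ≤ (n : ℝ) * ε4 := mul_le_mul_of_nonneg_right hnN0 hε4pos.le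
          calc (P : ℝ) * ((‖f‖ + 1) * (2 / n)) = 2 * P * (‖f‖ + 1) / n := by ring
            _ ≤ ε4 := by
                rw [div_le_iff₀ hn0]
                linarith
  -- conclusion
  rw [Real.dist_eq]
  have htri : |A - ∫ x, f x ∂(unifCube d)|
      ≤ |A - B| + |B - S| + |S - ∫ x, f x ∂(unifCube d)| := by
    calc |A - ∫ x, f x ∂(unifCube d)|
        = |(A - B) + ((B - S) + (S - ∫ x, f x ∂(unifCube d)))| := by ring_nf
      _ ≤ |A - B| + |(B - S) + (S - ∫ x, f x ∂(unifCube d))| := abs_add_le _ _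
      _ ≤ |A - B| + (|B - S| + |S - ∫ x, f x ∂(unifCube d)|) := by
          apply add_le_add_right (abs_add_le _ _)
      _ = |A - B| + |B - S| + |S - ∫ x, f x ∂(unifCube d)| := by ring
  have hIS' : |S - ∫ x, f x ∂(unifCube d)| ≤ ε4 := by
    rw [abs_sub_comm]
    exact hIS
  calc |A - ∫ x, f x ∂(unifCube d)|
      ≤ |A - B| + |B - S| + |S - ∫ x, f x ∂(unifCube d)| := htri
    _ ≤ ε4 + ε4 + ε4 := by linarith
    _ < ε := by rw [hε4]; linarith

end
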